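/- Let a > 0, T > 0, σ̂ ≥ 0, τ ≥ 0, δ ∈ [0,1], η ≥ 0 with τ ≤ ηT. Then (√(2σ̂²a/T) + 3a/T) / (√(2σ̂²a/(T + δτ)) + 3a/(T + δτ)) ≤ 1 + δη. -/
import Mathlib


theorem stmt_8 (a T σ τ δ η : ℝ) (ha : 0 < a) (hT : 0 < T) (hσ : 0 ≤ σ)
    (hτ : 0 ≤ τ) (hδ0 : 0 ≤ δ) (hδ1 : δ ≤ 1) (hη : 0 ≤ η) (hτη : τ ≤ η * T) :
    (Real.sqrt (2 * σ ^ 2 * a / T) + 3 * a / T)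
      / (Real.sqrt (2 * σ ^ 2 * a / (T + δ * τ)) + 3 * a / (T + δ * τ))
      ≤ 1 + δ * η := by
  set S := T + δ * τ with hS
  have hS0 : 0 < S := by positivity
  have hc : (0:ℝ) ≤ 1 + δ * η := by positivity
  have hST : S ≤ (1 + δ * η) * T := by
    have : δ * τ ≤ δ * (η * T) := mul_le_mul_of_nonneg_left hτη hδ0
    nlinarith
  have hfrac : 1 / T ≤ (1 + δ * η) / S := by
    rw [div_le_div_iff₀ hT hS0]
    linarith
  have hnn : (0:ℝ) ≤ 2 * σ ^ 2 * a := by positivity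
  have h1 : Real.sqrt (2 * σ ^ 2 * a / T) ≤
      (1 + δ * η) * Real.sqrt (2 * σ ^ 2 * a / S) := by
    have h2 : 2 * σ ^ 2 * a / T ≤ (1 + δ * η) ^ 2 * (2 * σ ^ 2 * a / S) := by
      have := mul_le_mul_of_nonneg_left hfrac hnn
      have hge : (1 + δ * η) ≤ (1 + δ * η) ^ 2 := by nlinarith [mul_nonneg hδ0 hη]
      have hpos : 0 ≤ 2 * σ ^ 2 * a / S := by positivity
      calc 2 * σ ^ 2 * a / T = 2 * σ ^ 2 * a * (1 / T) := by ring
        _ ≤ 2 * σ ^ 2 * a * ((1 + δ * η) / S) := this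
        _ = (1 + δ * η) * (2 * σ ^ 2 * a / S) := by ring
        _ ≤ (1 + δ * η) ^ 2 * (2 * σ ^ 2 * a / S) := by nlinarith
    calc Real.sqrt (2 * σ ^ 2 * a / T)
        ≤ Real.sqrt ((1 + δ * η) ^ 2 * (2 * σ ^ 2 * a / S)) := Real.sqrt_le_sqrt h2
      _ = (1 + δ * η) * Real.sqrt (2 * σ ^ 2 * a / S) := by
          rw [Real.sqrt_mul (by positivity), Real.sqrt_sq hc]
  have h3 : 3 * a / T ≤ (1 + δ * η) * (3 * a / S) := by
    have := mul_le_mul_of_nonneg_left hfrac (by positivity : (0:ℝ) ≤ 3 * a)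
    calc 3 * a / T = 3 * a * (1 / T) := by ring
      _ ≤ 3 * a * ((1 + δ * η) / S) := this
      _ = (1 + δ * η) * (3 * a / S) := by ring
  have hden : 0 < Real.sqrt (2 * σ ^ 2 * a / S) + 3 * a / S := by
    have : 0 ≤ Real.sqrt (2 * σ ^ 2 * a / S) := Real.sqrt_nonneg _
    have : 0 < 3 * a / S := by positivity
    positivity
  rw [div_le_iff₀ hden]
  nlinarith [Real.sqrt_nonneg (2 * σ ^ 2 * a / S)]
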